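/- Fix δ ∈ ℝ. For the Sabra bilinear operator B with parameter δ, one has ⟨B(u,v), v⟩_H = 0, i.e. Re Σ_{n≥1} (B(u,v))_n conj(v_n) = 0, whenever u ∈ V and v ∈ H, and also whenever v ∈ V and u ∈ H. -/

import Mathlib

open ComplexConjugate

noncomputable section

/-- Extension of a sequence `(u_n)_{n ≥ 1}` to integer indices, with the boundary
convention `u_m = 0` for `m ≤ 0` (in particular `u_0 = u_{-1} = 0`). -/
def ext (u : ℕ → ℂ) : ℤ → ℂ := fun m => if 1 ≤ m then u m.toNat else 0

/-- Wave numbers `k_n = k₀ 2^n`. -/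
def kseq (k₀ : ℝ) (n : ℤ) : ℝ := k₀ * 2 ^ n

/-- The Sabra bilinear operator with parameter `δ`. -/
def sabraB (k₀ δ : ℝ) (u v : ℕ → ℂ) : ℕ → ℂ := fun n =>
  (Complex.I / 3) * (kseq k₀ ((n : ℤ) + 1)) *
      ((1 + (δ : ℂ)) * conj (ext v ((n : ℤ) + 1)) * ext u ((n : ℤ) + 2)
        + (2 - (δ : ℂ)) * conj (ext u ((n : ℤ) + 1)) * ext v ((n : ℤ) + 2))
  + (Complex.I / 3) * (kseq k₀ (n : ℤ)) *
      ((1 - 2 * (δ : ℂ)) * conj (ext u ((n : ℤ) - 1)) * ext v ((n : ℤ) + 1)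
        - (1 + (δ : ℂ)) * conj (ext v ((n : ℤ) - 1)) * ext u ((n : ℤ) + 1))
  + (Complex.I / 3) * (kseq k₀ ((n : ℤ) - 1)) *
      ((2 - (δ : ℂ)) * ext u ((n : ℤ) - 1) * ext v ((n : ℤ) - 2)
        + (1 - 2 * (δ : ℂ)) * ext u ((n : ℤ) - 2) * ext v ((n : ℤ) - 1))

/-- Membership in `H`: square-summability over `n ≥ 1`. -/
def memH (u : ℕ → ℂ) : Prop := Summable (fun n : ℕ => ‖u (n + 1)‖ ^ 2)

/-- The `H`-norm `|u|_H = (∑_{n ≥ 1} |u_n|²)^{1/2}`. -/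
def normH (u : ℕ → ℂ) : ℝ := Real.sqrt (∑' n : ℕ, ‖u (n + 1)‖ ^ 2)

/-- Membership in `V`: `u ∈ H` and `∑_{n ≥ 1} k_n² |u_n|² < ∞`. -/
def memV (k₀ : ℝ) (u : ℕ → ℂ) : Prop :=
  memH u ∧ Summable (fun n : ℕ => (kseq k₀ (n + 1)) ^ 2 * ‖u (n + 1)‖ ^ 2)

/-- The `V`-norm `‖u‖_V = (∑_{n ≥ 1} k_n² |u_n|²)^{1/2}`. -/
def normV (k₀ : ℝ) (u : ℕ → ℂ) : ℝ :=
  Real.sqrt (∑' n : ℕ, (kseq k₀ (n + 1)) ^ 2 * ‖u (n + 1)‖ ^ 2)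

/-- The real inner product of `H`: `⟨u,v⟩_H = Re ∑_{n ≥ 1} u_n conj(v_n)`. -/
def innerH (u v : ℕ → ℂ) : ℝ := ∑' n : ℕ, (u (n + 1) * conj (v (n + 1))).re

namespace SabraAux

open Filter

lemma re_eq_of_add_conj {A B : ℂ} (h : A + conj A = B + conj B) : A.re = B.re := by
  have h2 := congrArg Complex.re h
  simp only [Complex.add_re, Complex.conj_re] at h2
  linarith

lemma ext_nat_succ (w : ℕ → ℂ) (n : ℕ) : ext w ((n:ℤ) + 1) = w (n + 1) := by
  rw [show ((n:ℤ) + 1) = ((n + 1 : ℕ) : ℤ) from by push_cast; ring]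
  simp [ext]

/-- The telescoping potential. -/
def Gf (k₀ δ : ℝ) (u v : ℕ → ℂ) (m : ℤ) : ℝ :=
  (Complex.I / 3 * (kseq k₀ m) *
      ((1 + (δ:ℂ)) * conj (ext v (m - 1)) * conj (ext v m) * ext u (m + 1)
        + (2 - (δ:ℂ)) * conj (ext v (m - 1)) * conj (ext u m) * ext v (m + 1))
    + Complex.I / 3 * (kseq k₀ (m - 1)) *
      ((2 - (δ:ℂ)) * conj (ext v (m - 2)) * conj (ext u (m - 1)) * ext v m
        + (1 - 2 * (δ:ℂ)) * conj (ext u (m - 2)) * conj (ext v (m - 1)) * ext v m)).re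

lemma telescope (k₀ δ : ℝ) (u v : ℕ → ℂ) (n : ℕ) :
    (sabraB k₀ δ u v (n + 1) * conj (v (n + 1))).re
      = Gf k₀ δ u v ((n:ℤ) + 2) - Gf k₀ δ u v ((n:ℤ) + 1) := by
  rw [← ext_nat_succ v n]
  simp only [sabraB, Gf]
  push_cast
  simp only [show (n:ℤ)+1+1 = (n:ℤ)+2 from by ring, show (n:ℤ)+1+2 = (n:ℤ)+3 from by ring,
    show (n:ℤ)+1-1 = (n:ℤ) from by ring, show (n:ℤ)+1-2 = (n:ℤ)-1 from by ring,
    show (n:ℤ)+2-1 = (n:ℤ)+1 from by ring, show (n:ℤ)+2+1 = (n:ℤ)+3 from by ring,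
    show (n:ℤ)+2-2 = (n:ℤ) from by ring]
  rw [← Complex.sub_re]
  apply re_eq_of_add_conj
  simp only [map_add, map_sub, map_mul, map_div₀, Complex.conj_I, Complex.conj_conj,
    Complex.conj_ofReal, map_ofNat, map_one]
  ring

lemma Gf_one (k₀ δ : ℝ) (u v : ℕ → ℂ) : Gf k₀ δ u v 1 = 0 := by
  norm_num [Gf, ext]

lemma toNat_tendsto : Tendsto Int.toNat atTop atTop :=
  tendsto_atTop_atTop.2 fun b => ⟨(b:ℤ), fun a ha => by omega⟩

lemma sq_tendsto_zero {x : ℕ → ℝ} (hx : ∀ n, 0 ≤ x n)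
    (h : Tendsto (fun n => x n ^ 2) atTop (nhds 0)) : Tendsto x atTop (nhds 0) := by
  have h1 : Tendsto (fun n => Real.sqrt (x n ^ 2)) atTop (nhds 0) := by
    have := (Real.continuous_sqrt.tendsto 0).comp h
    simpa [Function.comp_def] using this
  refine h1.congr fun n => Real.sqrt_sq (hx n)

lemma ext_tendsto {w : ℕ → ℂ} (hw : memH w) :
    Tendsto (fun m : ℤ => ext w m) atTop (nhds 0) := by
  have h0 : Tendsto (fun n : ℕ => w (n + 1)) atTop (nhds 0) := by
    rw [tendsto_zero_iff_norm_tendsto_zero]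
    exact sq_tendsto_zero (fun n => norm_nonneg _) hw.tendsto_atTop_zero
  have h1 : Tendsto (fun n : ℕ => if n = 0 then 0 else w n) atTop (nhds (0:ℂ)) := by
    rw [← tendsto_add_atTop_iff_nat 1]
    exact h0.congr fun n => by simp
  have h2 := h1.comp toNat_tendsto
  refine h2.congr fun m => ?_
  simp only [Function.comp, ext]
  by_cases hm : 1 ≤ m
  · rw [if_pos hm, if_neg (by omega)]
  · rw [if_neg hm, if_pos (by omega)]

lemma kseq_pos {k₀ : ℝ} (hk₀ : 0 < k₀) (m : ℤ) : 0 < kseq k₀ m := by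
  have : (0:ℝ) < 2 ^ m := zpow_pos (by norm_num) m
  exact mul_pos hk₀ this

lemma kseq_succ (k₀ : ℝ) (m : ℤ) : kseq k₀ (m + 1) = 2 * kseq k₀ m := by
  rw [kseq, kseq, zpow_add_one₀ (two_ne_zero)]
  ring

lemma kseq_pred (k₀ : ℝ) (m : ℤ) : kseq k₀ m = 2 * kseq k₀ (m - 1) := by
  have := kseq_succ k₀ (m - 1)
  simpa using this

lemma extK_tendsto {k₀ : ℝ} (hk₀ : 0 < k₀) {w : ℕ → ℂ} (hw : memV k₀ w) :
    Tendsto (fun m : ℤ => (kseq k₀ m : ℂ) * ext w m) atTop (nhds 0) := by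
  have h0 : Tendsto (fun n : ℕ => (kseq k₀ (n + 1) : ℂ) * w (n + 1)) atTop (nhds 0) := by
    rw [tendsto_zero_iff_norm_tendsto_zero]
    have : Tendsto (fun n : ℕ => kseq k₀ ((n:ℤ) + 1) * ‖w (n + 1)‖) atTop (nhds 0) := by
      apply sq_tendsto_zero
      · intro n; exact mul_nonneg (kseq_pos hk₀ _).le (norm_nonneg _)
      · exact (hw.2.tendsto_atTop_zero).congr fun n => by ring
    refine this.congr fun n => ?_
    rw [norm_mul, Complex.norm_real, Real.norm_eq_abs, abs_of_pos (kseq_pos hk₀ _)]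
  have h1 : Tendsto (fun n : ℕ => if n = 0 then 0 else (kseq k₀ (n:ℤ) : ℂ) * w n)
      atTop (nhds (0:ℂ)) := by
    rw [← tendsto_add_atTop_iff_nat 1]
    refine h0.congr fun n => by push_cast; simp
  have h2 := h1.comp toNat_tendsto
  refine h2.congr fun m => ?_
  simp only [Function.comp, ext]
  by_cases hm : 1 ≤ m
  · rw [if_pos hm, if_neg (by omega)]
    rw [show ((m.toNat : ℕ) : ℤ) = m from by omega]
  · rw [if_neg hm, if_pos (by omega), mul_zero]

lemma conj_tendsto {f : ℤ → ℂ} (hf : Tendsto f atTop (nhds 0)) :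
    Tendsto (fun m => conj (f m)) atTop (nhds 0) := by
  simpa using hf.star

lemma shift_add {f : ℤ → ℂ} (hf : Tendsto f atTop (nhds 0)) (c : ℤ) :
    Tendsto (fun m : ℤ => f (m + c)) atTop (nhds 0) :=
  hf.comp (tendsto_atTop_add_const_right atTop c tendsto_id)

lemma shift_sub {f : ℤ → ℂ} (hf : Tendsto f atTop (nhds 0)) (c : ℤ) :
    Tendsto (fun m : ℤ => f (m - c)) atTop (nhds 0) :=
  (shift_add hf (-c)).congr fun m => by rw [sub_eq_add_neg]

lemma mul3_tendsto (C : ℂ) {f g h : ℤ → ℂ} (hf : Tendsto f atTop (nhds 0))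
    (hg : Tendsto g atTop (nhds 0)) (hh : Tendsto h atTop (nhds 0)) :
    Tendsto (fun m => C * f m * g m * h m) atTop (nhds 0) := by
  simpa using ((tendsto_const_nhds.mul hf).mul hg).mul hh

lemma re_tendsto {X : ℤ → ℂ} (hX : Tendsto X atTop (nhds 0)) :
    Tendsto (fun m => (X m).re) atTop (nhds 0) := by
  simpa [Function.comp_def] using (Complex.continuous_re.tendsto 0).comp hX

lemma Gf_tendsto (k₀ δ : ℝ) (hk₀ : 0 < k₀) (u v : ℕ → ℂ)
    (h : (memV k₀ u ∧ memH v) ∨ (memV k₀ v ∧ memH u)) :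
    Tendsto (fun m : ℤ => Gf k₀ δ u v m) atTop (nhds 0) := by
  rcases h with ⟨hu, hv⟩ | ⟨hv, hu⟩
  · have KU := extK_tendsto hk₀ hu
    have HV := ext_tendsto hv
    have t1 := mul3_tendsto (Complex.I / 3 * ((1 + (δ:ℂ)) * 2⁻¹))
      (conj_tendsto (shift_sub HV 1)) (conj_tendsto HV) (shift_add KU 1)
    have t2 := mul3_tendsto (Complex.I / 3 * (2 - (δ:ℂ)))
      (conj_tendsto (shift_sub HV 1)) (conj_tendsto KU) (shift_add HV 1)
    have t3 := mul3_tendsto (Complex.I / 3 * (2 - (δ:ℂ)))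
      (conj_tendsto (shift_sub HV 2)) (conj_tendsto (shift_sub KU 1)) HV
    have t4 := mul3_tendsto (Complex.I / 3 * ((1 - 2 * (δ:ℂ)) * 2))
      (conj_tendsto (shift_sub KU 2)) (conj_tendsto (shift_sub HV 1)) HV
    have hX := ((t1.add t2).add t3).add t4
    rw [show (0:ℂ) + 0 + 0 + 0 = 0 from by ring] at hX
    refine (re_tendsto hX).congr fun m => ?_
    rw [Gf]
    congr 1
    rw [show ((kseq k₀ (m+1) : ℝ) : ℂ) = 2 * ((kseq k₀ m : ℝ) : ℂ) from by
          rw [kseq_succ]; push_cast; ring,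
        show ((kseq k₀ (m-1) : ℝ) : ℂ) = 2 * ((kseq k₀ (m-2) : ℝ) : ℂ) from by
          rw [kseq_pred k₀ (m-1)]; push_cast; ring_nf]
    simp only [map_mul, map_ofNat, Complex.conj_ofReal]
    ring
  · have KV := extK_tendsto hk₀ hv
    have HU := ext_tendsto hu
    have HV := ext_tendsto hv.1
    have t1 := mul3_tendsto (Complex.I / 3 * (1 + (δ:ℂ)))
      (conj_tendsto (shift_sub HV 1)) (conj_tendsto KV) (shift_add HU 1)
    have t2 := mul3_tendsto (Complex.I / 3 * ((2 - (δ:ℂ)) * 2⁻¹))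
      (conj_tendsto (shift_sub HV 1)) (conj_tendsto HU) (shift_add KV 1)
    have t3 := mul3_tendsto (Complex.I / 3 * ((2 - (δ:ℂ)) * 2⁻¹))
      (conj_tendsto (shift_sub HV 2)) (conj_tendsto (shift_sub HU 1)) KV
    have t4 := mul3_tendsto (Complex.I / 3 * (1 - 2 * (δ:ℂ)))
      (conj_tendsto (shift_sub HU 2)) (conj_tendsto (shift_sub KV 1)) HV
    have hX := ((t1.add t2).add t3).add t4
    rw [show (0:ℂ) + 0 + 0 + 0 = 0 from by ring] at hX
    refine (re_tendsto hX).congr fun m => ?_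
    rw [Gf]
    congr 1
    rw [show ((kseq k₀ (m+1) : ℝ) : ℂ) = 2 * ((kseq k₀ m : ℝ) : ℂ) from by
          rw [kseq_succ]; push_cast; ring,
        show ((kseq k₀ m : ℝ) : ℂ) = 2 * ((kseq k₀ (m-1) : ℝ) : ℂ) from by
          rw [kseq_pred k₀ m]; push_cast; ring]
    simp only [map_mul, map_ofNat, Complex.conj_ofReal]
    ring

end SabraAux

/-- `⟨B(u,v), v⟩_H = 0` whenever `u ∈ V, v ∈ H`, and also whenever `v ∈ V, u ∈ H`,
for the Sabra bilinear operator `B` with parameter `δ`. -/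
theorem sabra_energy_conservation (k₀ δ : ℝ) (hk₀ : 0 < k₀) (u v : ℕ → ℂ)
    (h : (memV k₀ u ∧ memH v) ∨ (memV k₀ v ∧ memH u)) :
    innerH (sabraB k₀ δ u v) v = 0 := by
  classical
  open SabraAux Filter in
  by_cases hs : Summable (fun n : ℕ => (sabraB k₀ δ u v (n + 1) * conj (v (n + 1))).re)
  · have h1 := hs.hasSum.tendsto_sum_nat
    have hsum : ∀ N : ℕ, ∑ n ∈ Finset.range N,
        (sabraB k₀ δ u v (n + 1) * conj (v (n + 1))).re = Gf k₀ δ u v ((N:ℤ) + 1) := by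
      intro N
      have key : ∀ n : ℕ, (sabraB k₀ δ u v (n + 1) * conj (v (n + 1))).re
          = (fun i : ℕ => Gf k₀ δ u v ((i:ℤ) + 1)) (n + 1)
            - (fun i : ℕ => Gf k₀ δ u v ((i:ℤ) + 1)) n := by
        intro n
        simp only
        rw [show (((n+1:ℕ):ℤ)) + 1 = (n:ℤ) + 2 from by push_cast; ring]
        exact telescope k₀ δ u v n
      rw [Finset.sum_congr rfl fun n _ => key n,
        Finset.sum_range_sub (fun i : ℕ => Gf k₀ δ u v ((i:ℤ) + 1)) N]
      norm_num [Gf_one]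
    have h2 : Tendsto (fun N : ℕ => ∑ n ∈ Finset.range N,
        (sabraB k₀ δ u v (n + 1) * conj (v (n + 1))).re) atTop (nhds 0) := by
      refine Tendsto.congr (fun N => (hsum N).symm) ?_
      exact (Gf_tendsto k₀ δ hk₀ u v h).comp
        (tendsto_atTop_add_const_right atTop 1 tendsto_natCast_atTop_atTop)
    exact tendsto_nhds_unique h1 h2
  · exact tsum_eq_zero_of_not_summable hs

end
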